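/- Consider the large complex structure F-term equations $F_a = \partial_a \hat{W} - \frac{2 z_a}{C'} \hat{W} = 0$, with $\hat{W}$ the cubic flux superpotential with real coefficients $w, n'_0, n'_a, m^0, m^a$ and $z_a, C'$ as defined from the Kähler potential $\hat{K} = -\log(\frac{4}{3}\kappa + k)$. If $m^0 \neq 0$, then any solution satisfies $\mathrm{Im}(\hat{W}) = \frac{2 w m^0}{3} \kappa \left(1 + \frac{3k}{4\kappa}\right)$, where $\kappa = d_{abc} z^a z^b z^c$ evaluated at the solution. -/

import Mathlib

open Finset

def S3 {h : ℕ} (d : Fin h → Fin h → Fin h → ℝ) (f g p : Fin h → ℝ) : ℝ :=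
  ∑ a, ∑ b, ∑ e, d a b e * f a * g b * p e

lemma S3_swap12 {h : ℕ} {d : Fin h → Fin h → Fin h → ℝ}
    (h12 : ∀ a b e, d a b e = d b a e) (f g p : Fin h → ℝ) :
    S3 d f g p = S3 d g f p := by
  unfold S3
  rw [Finset.sum_comm]
  refine Finset.sum_congr rfl fun a _ => Finset.sum_congr rfl fun b _ =>
    Finset.sum_congr rfl fun e _ => ?_
  rw [h12 b a e]; ring

lemma S3_swap23 {h : ℕ} {d : Fin h → Fin h → Fin h → ℝ}
    (h23 : ∀ a b e, d a b e = d a e b) (f g p : Fin h → ℝ) :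
    S3 d f g p = S3 d f p g := by
  unfold S3
  refine Finset.sum_congr rfl fun a _ => ?_
  rw [Finset.sum_comm]
  refine Finset.sum_congr rfl fun b _ => Finset.sum_congr rfl fun e _ => ?_
  rw [h23 a e b]; ring



/-- For the large complex structure F-term equations
`F_a = ∂_a Ŵ - (2 z_a / C') Ŵ = 0` with the cubic flux superpotential and
`m⁰ ≠ 0`, any solution satisfies `Im Ŵ = (2 w m⁰/3) κ (1 + 3k/(4κ))`.
Here `c̃` is the complex constant of the prepotential with `k = i(c̃ - c̃*)`. -/
theorem lcs_fterm_im_W_value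
    (h : ℕ) (d : Fin h → Fin h → Fin h → ℝ)
    (hd : ∀ a b c, d a b c = d b a c ∧ d a b c = d a c b)
    (w k n0' m0 : ℝ) (c : ℂ) (hck : (k : ℂ) = Complex.I * (c - (starRingEnd ℂ) c))
    (n' m : Fin h → ℝ) (z χ : Fin h → ℝ)
    (Z : Fin h → ℂ) (hZ : Z = fun a => (z a : ℂ) + (χ a : ℂ) * Complex.I)
    (κ : ℝ) (hκ : κ = ∑ a, ∑ b, ∑ e, d a b e * z a * z b * z e)
    (κ' : ℝ) (hκ' : κ' = κ + 3 * k / 4) (hκ'pos : 0 < κ')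
    (κa : Fin h → ℝ) (hκa : κa = fun a => ∑ b, ∑ e, d a b e * z b * z e)
    (C' : ℝ) (hC' : C' = 1 - 9 * k / (4 * κ')) (hC'ne : C' ≠ 0)
    (za : Fin h → ℝ) (hza : za = fun a => (3 * κa a / (4 * κ')) * C')
    (hκne : κ ≠ 0) (hm0 : m0 ≠ 0)
    (W : ℂ)
    (hW : W = (w : ℂ) * ((n0' : ℂ) - (m0 : ℂ) * c
      + Complex.I * ∑ a, (n' a : ℂ) * Z a
      - (1 / 2) * ∑ a, ∑ b, ∑ e, (d a b e : ℂ) * (m a : ℂ) * Z b * Z e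
      + (Complex.I * (m0 : ℂ) / 6) * ∑ a, ∑ b, ∑ e, (d a b e : ℂ) * Z a * Z b * Z e))
    (dW : Fin h → ℂ)
    (hdW : dW = fun a => (w : ℂ) * (Complex.I * (n' a : ℂ)
      - ∑ b, ∑ e, (d a b e : ℂ) * (m b : ℂ) * Z e
      + (Complex.I * (m0 : ℂ) / 2) * ∑ b, ∑ e, (d a b e : ℂ) * Z b * Z e))
    (hF : ∀ a, dW a - (2 * (za a : ℂ) / (C' : ℂ)) * W = 0) :
    W.im = (2 * w * m0 / 3) * κ * (1 + 3 * k / (4 * κ)) := by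
  have h12 : ∀ a b e, d a b e = d b a e := fun a b e => (hd a b e).1
  have h23 : ∀ a b e, d a b e = d a e b := fun a b e => (hd a b e).2
  have hκ'ne : κ' ≠ 0 := ne_of_gt hκ'pos
  have hcim : c.im = -k / 2 := by
    have := congrArg Complex.re hck
    simp at this
    linarith
  set nz : ℝ := ∑ a, n' a * z a with hnz
  set P : ℝ := S3 d m z χ with hP
  set T : ℝ := S3 d z χ χ with hT
  have hκS : κ = S3 d z z z := hκ
  -- Imaginary part of W
  have hWim : W.im = w * (m0 * k / 2 + nz - P + (m0/6) * (κ - 3*T)) := by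
    have hB : (∑ a, ∑ b, ∑ e, (d a b e : ℂ) * (m a : ℂ) * Z b * Z e).im
        = S3 d m z χ + S3 d m χ z := by
      rw [show S3 d m z χ + S3 d m χ z
          = ∑ a, ∑ b, ∑ e, (d a b e * m a * (z b * χ e + χ b * z e)) by
        unfold S3; rw [← Finset.sum_add_distrib]
        refine Finset.sum_congr rfl fun a _ => ?_
        rw [← Finset.sum_add_distrib]
        refine Finset.sum_congr rfl fun b _ => ?_
        rw [← Finset.sum_add_distrib]
        exact Finset.sum_congr rfl fun e _ => by ring]
      simp only [Complex.im_sum]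
      refine Finset.sum_congr rfl fun a _ => Finset.sum_congr rfl fun b _ =>
        Finset.sum_congr rfl fun e _ => ?_
      subst hZ
      simp [Complex.mul_im, Complex.mul_re]
      ring
    have hC : (∑ a, ∑ b, ∑ e, (d a b e : ℂ) * Z a * Z b * Z e).re
        = S3 d z z z - S3 d z χ χ - S3 d χ z χ - S3 d χ χ z := by
      rw [show S3 d z z z - S3 d z χ χ - S3 d χ z χ - S3 d χ χ z
          = ∑ a, ∑ b, ∑ e, (d a b e * (z a * z b * z e - z a * χ b * χ e
              - χ a * z b * χ e - χ a * χ b * z e)) by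
        unfold S3
        rw [← Finset.sum_sub_distrib, ← Finset.sum_sub_distrib, ← Finset.sum_sub_distrib]
        refine Finset.sum_congr rfl fun a _ => ?_
        rw [← Finset.sum_sub_distrib, ← Finset.sum_sub_distrib, ← Finset.sum_sub_distrib]
        refine Finset.sum_congr rfl fun b _ => ?_
        rw [← Finset.sum_sub_distrib, ← Finset.sum_sub_distrib, ← Finset.sum_sub_distrib]
        exact Finset.sum_congr rfl fun e _ => by ring]
      simp only [Complex.re_sum]
      refine Finset.sum_congr rfl fun a _ => Finset.sum_congr rfl fun b _ =>
        Finset.sum_congr rfl fun e _ => ?_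
      subst hZ
      simp [Complex.mul_im, Complex.mul_re]
      ring
    have hA : (∑ a, (n' a : ℂ) * Z a).re = nz := by
      rw [hnz, Complex.re_sum]
      refine Finset.sum_congr rfl fun a _ => ?_
      subst hZ
      simp [Complex.mul_re]
    rw [hW]
    simp only [Complex.mul_im, Complex.mul_re, Complex.add_im, Complex.add_re,
      Complex.sub_im, Complex.sub_re, Complex.I_re, Complex.I_im,
      Complex.ofReal_re, Complex.ofReal_im, Complex.div_re, Complex.div_im,
      Complex.one_re, Complex.one_im]
    rw [hA, hB, hC]
    rw [S3_swap23 h23 m χ z, ← hP,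
      show S3 d χ z χ = T by rw [hT, S3_swap12 h12 z χ χ],
      show S3 d χ χ z = T by rw [hT, S3_swap12 h12 z χ χ, S3_swap23 h23 χ z χ],
      ← hκS, hcim]
    simp [Complex.normSq]
    refine Or.inl ?_
    rw [← hT]
    ring
  -- contracted F-term equation
  have hE : ∑ a, (z a : ℂ) * dW a = ((3*κ/(2*κ') : ℝ) : ℂ) * W := by
    have step : ∀ a, (z a : ℂ) * dW a = ((z a * (3 * κa a / (2*κ')) : ℝ) : ℂ) * W := by
      intro a
      have hFa := hF a
      have hdWa : dW a = (2 * (za a : ℂ) / (C' : ℂ)) * W := by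
        have := sub_eq_zero.mp hFa
        exact this
      rw [hdWa, hza]
      have hCne : (C' : ℂ) ≠ 0 := Complex.ofReal_ne_zero.mpr hC'ne
      have hκ'neC : ((κ' : ℂ)) ≠ 0 := Complex.ofReal_ne_zero.mpr hκ'ne
      push_cast
      field_simp
      ring
    rw [Finset.sum_congr rfl fun a _ => step a, ← Finset.sum_mul]
    congr 1
    rw [← Complex.ofReal_sum]
    congr 1
    have hzκ : ∑ i, z i * κa i = κ := by
      rw [hκ, hκa]
      refine Finset.sum_congr rfl fun a _ => ?_
      simp only
      rw [Finset.mul_sum]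
      refine Finset.sum_congr rfl fun b _ => ?_
      rw [Finset.mul_sum]
      exact Finset.sum_congr rfl fun e _ => by ring
    calc ∑ i, z i * (3 * κa i / (2 * κ'))
        = (∑ i, z i * κa i) * (3 / (2 * κ')) := by
          rw [Finset.sum_mul]
          exact Finset.sum_congr rfl fun i _ => by ring
      _ = 3 * κ / (2 * κ') := by rw [hzκ]; ring
  -- imaginary part of the contracted equation
  have hBa : ∀ a, (∑ b, ∑ e, (d a b e : ℂ) * (m b : ℂ) * Z e).im
      = ∑ b, ∑ e, d a b e * m b * χ e := by
    intro a
    simp only [Complex.im_sum]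
    refine Finset.sum_congr rfl fun b _ => Finset.sum_congr rfl fun e _ => ?_
    subst hZ
    simp [Complex.mul_im, Complex.mul_re]
  have hCa : ∀ a, (∑ b, ∑ e, (d a b e : ℂ) * Z b * Z e).re
      = ∑ b, ∑ e, d a b e * (z b * z e - χ b * χ e) := by
    intro a
    simp only [Complex.re_sum]
    refine Finset.sum_congr rfl fun b _ => Finset.sum_congr rfl fun e _ => ?_
    subst hZ
    simp [Complex.mul_im, Complex.mul_re]
    ring
  have hLim : (∑ a, (z a : ℂ) * dW a).im
      = w * (nz - S3 d z m χ + (m0/2) * (κ - T)) := by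
    simp only [Complex.im_sum]
    have step2 : ∀ a, ((z a : ℂ) * dW a).im
        = w * (z a * n' a) - w * (z a * (∑ b, ∑ e, d a b e * m b * χ e))
          + w * (m0/2) * (z a * (∑ b, ∑ e, d a b e * (z b * z e - χ b * χ e))) := by
      intro a
      rw [hdW]
      simp only
      simp [Complex.mul_im, Complex.mul_re, hBa a, hCa a, Complex.normSq]
      ring
    rw [Finset.sum_congr rfl fun a _ => step2 a]
    rw [Finset.sum_add_distrib, Finset.sum_sub_distrib, ← Finset.mul_sum,
      ← Finset.mul_sum, ← Finset.mul_sum]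
    have e1 : ∑ a, z a * n' a = nz := by
      rw [hnz]; exact Finset.sum_congr rfl fun a _ => by ring
    have e2 : ∑ a, z a * (∑ b, ∑ e, d a b e * m b * χ e) = S3 d z m χ := by
      unfold S3
      refine Finset.sum_congr rfl fun a _ => ?_
      rw [Finset.mul_sum]
      refine Finset.sum_congr rfl fun b _ => ?_
      rw [Finset.mul_sum]
      exact Finset.sum_congr rfl fun e _ => by ring
    have e3 : ∑ a, z a * (∑ b, ∑ e, d a b e * (z b * z e - χ b * χ e)) = κ - T := by
      rw [hT, hκS]
      unfold S3
      rw [← Finset.sum_sub_distrib]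
      refine Finset.sum_congr rfl fun a _ => ?_
      rw [Finset.mul_sum, ← Finset.sum_sub_distrib]
      refine Finset.sum_congr rfl fun b _ => ?_
      rw [Finset.mul_sum, ← Finset.sum_sub_distrib]
      exact Finset.sum_congr rfl fun e _ => by ring
    rw [e1, e2, e3]
    ring
  have hEim : w * (nz - S3 d z m χ + (m0/2) * (κ - T)) = (3 * κ / (2 * κ')) * W.im := by
    rw [← hLim, hE, Complex.mul_im]
    simp only [Complex.ofReal_re, Complex.ofReal_im]
    ring
  have hPzm : S3 d z m χ = P := by rw [hP, S3_swap12 h12]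
  rw [hPzm] at hEim
  -- final algebra
  have hne : 2 * κ' - 3 * κ ≠ 0 := by
    intro h0
    apply hC'ne
    have hk : κ' = 9 * k / 4 := by linarith
    have hkpos : 0 < k := by linarith
    rw [hC', hk]
    field_simp
    norm_num
  have eq2' : 2 * κ' * (w * (nz - P + m0/2 * (κ - T))) = 3 * κ * W.im := by
    rw [hEim]; field_simp
  have hfin : W.im * (2 * κ' - 3 * κ) = w * m0 * κ' * (k - 2 * κ / 3) := by
    linear_combination (2 * κ') * hWim + eq2'
  have hIW : W.im = 2/3 * w * m0 * κ' := by
    have h0 : (W.im - 2/3 * w * m0 * κ') * (2 * κ' - 3 * κ) = 0 := by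
      linear_combination hfin - (4/3 * w * m0 * κ') * hκ'
    rcases mul_eq_zero.mp h0 with h1 | h2
    · linarith
    · exact absurd h2 hne
  rw [hIW, hκ']
  field_simp
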